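/- Let B ∈ ℝ^{n×n} be symmetric with eigenvalues μ_1 ≤ μ_2 ≤ … ≤ μ_n listed in nondecreasing order with multiplicity, and let 0 ≤ r ≤ n. Then the minimum over all symmetric idempotent matrices P ∈ ℝ^{n×n} (orthogonal projections) with rank(P) ≤ r of trace(P B) equals Σ_{i=1}^{r} min(μ_i, 0), and the minimum is attained. -/

import Mathlib

open Matrix

lemma sum_castLE_eq {n r : ℕ} (hr : r ≤ n) (f : Fin n → ℝ) :
    (∑ i : Fin r, f (Fin.castLE hr i)) = ∑ i : Fin n, (if (i : ℕ) < r then f i else 0) := by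
  have hfin : Finset.univ.filter (fun i : Fin n => (i : ℕ) < r)
      = Finset.univ.map (Fin.castLEEmb hr) := by
    ext i
    simp only [Finset.mem_filter, Finset.mem_univ, true_and, Finset.mem_map]
    constructor
    · intro h; exact ⟨⟨i, h⟩, by simp [Fin.castLEEmb, Fin.ext_iff]⟩
    · rintro ⟨a, rfl⟩; simp [Fin.castLEEmb]
  rw [← Finset.sum_filter, hfin, Finset.sum_map]
  rfl

lemma filter_lt_card {n r : ℕ} (hr : r ≤ n) :
    (Finset.univ.filter (fun i : Fin n => (i : ℕ) < r)).card = r := by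
  have hfin : Finset.univ.filter (fun i : Fin n => (i : ℕ) < r)
      = Finset.univ.map (Fin.castLEEmb hr) := by
    ext i
    simp only [Finset.mem_filter, Finset.mem_univ, true_and, Finset.mem_map]
    constructor
    · intro h; exact ⟨⟨i, h⟩, by simp [Fin.castLEEmb, Fin.ext_iff]⟩
    · rintro ⟨a, rfl⟩; simp [Fin.castLEEmb]
  rw [hfin]; simp

lemma proj_diag_mem {n : ℕ} (Q : Matrix (Fin n) (Fin n) ℝ) (hs : Qᵀ = Q) (hi : Q * Q = Q)
    (i : Fin n) : 0 ≤ Q i i ∧ Q i i ≤ 1 := by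
  have hsq : Q i i = ∑ j, Q i j * Q i j := by
    conv_lhs => rw [← hi]
    rw [Matrix.mul_apply]
    refine Finset.sum_congr rfl fun j _ => ?_
    have : Q j i = Qᵀ i j := rfl
    rw [this, hs]
  have h0 : 0 ≤ Q i i := by
    rw [hsq]; exact Finset.sum_nonneg fun j _ => mul_self_nonneg _
  refine ⟨h0, ?_⟩
  have hge : Q i i * Q i i ≤ Q i i := by
    conv_rhs => rw [hsq]
    exact Finset.single_le_sum (fun j _ => mul_self_nonneg (Q i j)) (Finset.mem_univ i)
  nlinarith

lemma key_ineq {n r : ℕ} (hr : r ≤ n) (μ : Fin n → ℝ) (hμ : Monotone μ)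
    (t : Fin n → ℝ) (h0 : ∀ i, 0 ≤ t i) (h1 : ∀ i, t i ≤ 1)
    (hs : ∑ i, t i ≤ (r : ℝ)) :
    (∑ i : Fin r, min (μ (Fin.castLE hr i)) 0) ≤ ∑ i, t i * μ i := by
  set m : Fin n → ℝ := fun i => min (μ i) 0 with hm
  obtain ⟨c, hc0, hlow, hhigh⟩ :
      ∃ c : ℝ, c ≤ 0 ∧ (∀ i : Fin n, (i : ℕ) < r → m i ≤ c) ∧
        (∀ i : Fin n, r ≤ (i : ℕ) → c ≤ m i) := by
    by_cases h : r < n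
    · refine ⟨m ⟨r, h⟩, min_le_right _ _, fun i hi => ?_, fun i hi => ?_⟩
      · exact min_le_min (hμ (le_of_lt hi)) le_rfl
      · exact min_le_min (hμ hi) le_rfl
    · exact ⟨0, le_rfl, fun i _ => min_le_right _ _,
        fun i hi => absurd (lt_of_lt_of_le i.isLt (le_of_not_gt h)) (not_lt.mpr hi)⟩
  rw [sum_castLE_eq hr m]
  have step : ∀ i : Fin n,
      (if (i : ℕ) < r then m i else 0) ≤ t i * m i + (if (i : ℕ) < r then c else 0) - c * t i := by
    intro i
    by_cases h : (i : ℕ) < r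
    · simp only [h, if_pos]
      have := hlow i h
      nlinarith [h1 i, h0 i]
    · simp only [h, if_neg, not_false_iff]
      have := hhigh i (le_of_not_gt h)
      nlinarith [h0 i]
  calc (∑ i : Fin n, if (i : ℕ) < r then m i else 0)
      ≤ ∑ i : Fin n, (t i * m i + (if (i : ℕ) < r then c else 0) - c * t i) :=
        Finset.sum_le_sum fun i _ => step i
    _ = (∑ i, t i * m i) + (r : ℝ) * c - c * ∑ i, t i := by
        rw [Finset.sum_sub_distrib, Finset.sum_add_distrib, ← Finset.sum_filter,
          Finset.sum_const, filter_lt_card hr, Finset.mul_sum]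
        simp [nsmul_eq_mul]
    _ ≤ ∑ i, t i * m i := by nlinarith
    _ ≤ ∑ i, t i * μ i := by
        refine Finset.sum_le_sum fun i _ => ?_
        exact mul_le_mul_of_nonneg_left (min_le_left _ _) (h0 i)

lemma trace_eq_rank_proj {n : ℕ} (P : Matrix (Fin n) (Fin n) ℝ)
    (hs : Pᵀ = P) (hi : P * P = P) : P.trace = (P.rank : ℝ) := by
  have hH : P.IsHermitian := by
    rwa [Matrix.IsHermitian, conjTranspose_eq_transpose_of_trivial]
  have heig : ∀ i : Fin n, hH.eigenvalues i = 0 ∨ hH.eigenvalues i = 1 := by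
    intro i
    set v := hH.eigenvectorBasis i with hv
    have hmv := hH.mulVec_eigenvectorBasis i
    have h2 : P *ᵥ (P *ᵥ ⇑v) = (hH.eigenvalues i * hH.eigenvalues i) • ⇑v := by
      rw [hmv, mulVec_smul, hmv, smul_smul]
    rw [mulVec_mulVec, hi, hmv] at h2
    have hvne : (⇑v : Fin n → ℝ) ≠ 0 := by
      intro h0
      exact hH.eigenvectorBasis.orthonormal.ne_zero i (by ext x; exact congrFun h0 x)
    have : hH.eigenvalues i = hH.eigenvalues i * hH.eigenvalues i := by
      have := sub_eq_zero.mpr h2.symm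
      rw [← sub_smul] at this
      rcases smul_eq_zero.mp this with h | h
      · linarith [sub_eq_zero.mp h]
      · exact absurd h hvne
    have h2' : hH.eigenvalues i * (hH.eigenvalues i - 1) = 0 := by ring_nf; linarith
    rcases mul_eq_zero.mp h2' with h | h
    · exact Or.inl h
    · exact Or.inr (by linarith)
  have htr : P.trace = ∑ i, hH.eigenvalues i := by
    conv_lhs => rw [hH.spectral_theorem]
    rw [Unitary.conjStarAlgAut_apply]
    rw [Matrix.trace_mul_cycle]
    rw [show (star (hH.eigenvectorUnitary : Matrix (Fin n) (Fin n) ℝ)) *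
        (hH.eigenvectorUnitary : Matrix (Fin n) (Fin n) ℝ) = 1 from
      Unitary.coe_star_mul_self _, one_mul]
    simp [Matrix.trace_diagonal]
  rw [htr, hH.rank_eq_card_non_zero_eigs, Fintype.card_subtype]
  calc (∑ i, hH.eigenvalues i)
      = ∑ i, (if hH.eigenvalues i ≠ 0 then (1:ℝ) else 0) :=
        Finset.sum_congr rfl fun i _ => by rcases heig i with h | h <;> simp [h]
    _ = ((Finset.univ.filter (fun i => hH.eigenvalues i ≠ 0)).card : ℝ) := by
        rw [Finset.sum_boole]

/-- For a real symmetric `B ∈ ℝ^{n×n}` with eigenvalues `μ₁ ≤ … ≤ μₙ` (listed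
nondecreasing with multiplicity, via an orthogonal diagonalization
`B = U diag(μ) Uᵀ`) and `0 ≤ r ≤ n`: the minimum of `trace(PB)` over all symmetric
idempotent `P` with `rank P ≤ r` equals `Σ_{i=1}^r min(μᵢ, 0)`, and it is attained. -/
theorem min_trace_proj_rank_le {n : ℕ} (B : Matrix (Fin n) (Fin n) ℝ)
    (hB : B.IsSymm) (μ : Fin n → ℝ) (hμ : Monotone μ)
    (U : Matrix (Fin n) (Fin n) ℝ) (hU : Uᵀ * U = 1)
    (hdiag : B = U * Matrix.diagonal μ * Uᵀ)
    (r : ℕ) (hr : r ≤ n) :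
    IsLeast
      {t : ℝ | ∃ P : Matrix (Fin n) (Fin n) ℝ,
        Pᵀ = P ∧ P * P = P ∧ P.rank ≤ r ∧ t = Matrix.trace (P * B)}
      (∑ i : Fin r, min (μ (Fin.castLE hr i)) 0) := by
  have hUU : U * Uᵀ = 1 := mul_eq_one_comm.mp hU
  constructor
  · -- membership: construct the optimal projection
    set d : Fin n → ℝ := fun i => if (i : ℕ) < r ∧ μ i < 0 then 1 else 0 with hd
    set D : Matrix (Fin n) (Fin n) ℝ := Matrix.diagonal d with hD
    have hdd : (fun i => d i * d i) = d := by
      funext i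
      by_cases h : (i : ℕ) < r ∧ μ i < 0 <;> simp [hd, h]
    have hDD : D * D = D := by
      rw [hD, Matrix.diagonal_mul_diagonal, hdd]
    have hDt : Dᵀ = D := Matrix.diagonal_transpose d
    refine ⟨U * D * Uᵀ, ?_, ?_, ?_, ?_⟩
    · simp only [Matrix.transpose_mul, Matrix.transpose_transpose, hDt, Matrix.mul_assoc]
    · have h1 : (U * D * Uᵀ) * (U * D * Uᵀ) = U * (D * ((Uᵀ * U) * (D * Uᵀ))) := by
        simp only [Matrix.mul_assoc]
      rw [h1, hU, one_mul, ← Matrix.mul_assoc D D, hDD, Matrix.mul_assoc]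
    · have h2 : (U * D * Uᵀ).rank ≤ D.rank := by
        calc (U * D * Uᵀ).rank ≤ (D * Uᵀ).rank := by
              rw [Matrix.mul_assoc]; exact Matrix.rank_mul_le_right U (D * Uᵀ)
          _ ≤ D.rank := Matrix.rank_mul_le_left D Uᵀ
      refine h2.trans ?_
      rw [hD, Matrix.rank_diagonal, Fintype.card_subtype]
      calc (Finset.univ.filter (fun i => d i ≠ 0)).card
          ≤ (Finset.univ.filter (fun i : Fin n => (i : ℕ) < r)).card := by
            refine Finset.card_le_card fun i hi => ?_
            simp only [Finset.mem_filter, Finset.mem_univ, true_and] at hi ⊢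
            by_contra h
            exact hi (by simp [hd, h])
        _ = r := filter_lt_card hr
    · have h3 : (U * D * Uᵀ) * B = U * (D * Matrix.diagonal μ) * Uᵀ := by
        rw [hdiag]
        have : (U * D * Uᵀ) * (U * Matrix.diagonal μ * Uᵀ)
            = U * (D * ((Uᵀ * U) * (Matrix.diagonal μ * Uᵀ))) := by
          simp only [Matrix.mul_assoc]
        rw [this, hU, one_mul, Matrix.mul_assoc, ← Matrix.mul_assoc D, ← Matrix.mul_assoc U]
      rw [h3, Matrix.trace_mul_comm, ← Matrix.mul_assoc, hU, one_mul,
        Matrix.diagonal_mul_diagonal, Matrix.trace_diagonal]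
      rw [sum_castLE_eq hr (fun i => min (μ i) 0)]
      refine Finset.sum_congr rfl fun i _ => ?_
      by_cases h : (i : ℕ) < r
      · by_cases h' : μ i < 0
        · simp [hd, h, h', min_eq_left (le_of_lt h')]
        · simp [hd, h, h', min_eq_right (le_of_not_gt h')]
      · simp [hd, h]
  · -- lower bound
    rintro x ⟨P, hPs, hPi, hPr, rfl⟩
    set Q : Matrix (Fin n) (Fin n) ℝ := Uᵀ * P * U with hQ
    have hQs : Qᵀ = Q := by
      rw [hQ]
      simp only [Matrix.transpose_mul, Matrix.transpose_transpose, hPs, Matrix.mul_assoc]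
    have hQi : Q * Q = Q := by
      rw [hQ]
      have : (Uᵀ * P * U) * (Uᵀ * P * U) = Uᵀ * (P * ((U * Uᵀ) * (P * U))) := by
        simp only [Matrix.mul_assoc]
      rw [this, hUU, one_mul, ← Matrix.mul_assoc P P, hPi, Matrix.mul_assoc]
    have htrQ : Q.trace = P.trace := by
      rw [hQ, Matrix.trace_mul_comm, ← Matrix.mul_assoc, hUU, one_mul]
    have hsum : ∑ i, Q i i ≤ (r : ℝ) := by
      have : (∑ i, Q i i) = P.trace := htrQ
      rw [this, trace_eq_rank_proj P hPs hPi]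
      exact_mod_cast hPr
    have htr : Matrix.trace (P * B) = ∑ i, Q i i * μ i := by
      rw [hdiag, ← Matrix.mul_assoc, ← Matrix.mul_assoc, Matrix.trace_mul_comm,
        ← Matrix.mul_assoc, ← Matrix.mul_assoc]
      have : Uᵀ * P * U * Matrix.diagonal μ = Q * Matrix.diagonal μ := rfl
      rw [this]
      rw [Matrix.trace]
      refine Finset.sum_congr rfl fun i _ => ?_
      simp [Matrix.diag, Matrix.mul_diagonal]
    rw [htr]
    exact key_ineq hr μ hμ (fun i => Q i i)
      (fun i => (proj_diag_mem Q hQs hQi i).1)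
      (fun i => (proj_diag_mem Q hQs hQi i).2) hsum
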